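/- Suppose α₁,…,α_d,1 are linearly independent over ℚ and let q₁<q₂<⋯ be the best approximation denominators of α=(α₁,…,α_d). Then α is badly approximable if and only if sup_{j≥1} q_{j+1}/q_j < ∞. -/

import Mathlib

/-- Distance from a real number to the nearest integer. -/
noncomputable def dist01 (x : ℝ) : ℝ := |x - (round x : ℝ)|

/-- `max_{1 ≤ j ≤ d} ‖q α_j‖`. -/
noncomputable def simErr (d : ℕ) (α : Fin d → ℝ) (q : ℕ) : ℝ :=
  ⨆ j : Fin d, dist01 ((q : ℝ) * α j)

/-- `q` enumerates (in increasing order) all best approximation denominators of `α`. -/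
def IsBestApproxDenoms (d : ℕ) (α : Fin d → ℝ) (q : ℕ → ℕ) : Prop :=
  StrictMono q ∧ (∀ ν, 0 < q ν) ∧
  (∀ ν, ∀ m : ℕ, 0 < m → m < q ν → simErr d α (q ν) < simErr d α m) ∧
  (∀ m : ℕ, 0 < m →
    (∀ m' : ℕ, 0 < m' → m' < m → simErr d α m < simErr d α m') → ∃ ν, q ν = m)

/-- `α` is badly approximable: `inf_{q ∈ ℤ₊} q^{1/d} max_j ‖q α_j‖ > 0`. -/
def IsBadlyApprox (d : ℕ) (α : Fin d → ℝ) : Prop :=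
  ∃ c : ℝ, 0 < c ∧ ∀ m : ℕ, 0 < m → c ≤ (m : ℝ) ^ ((1 : ℝ) / d) * simErr d α m


namespace BadApproxAux

lemma dist01_nonneg (x : ℝ) : 0 ≤ dist01 x := abs_nonneg _

lemma dist01_le_half (x : ℝ) : dist01 x ≤ 1 / 2 := abs_sub_round x

lemma dist01_le_abs_sub_int (x : ℝ) (z : ℤ) : dist01 x ≤ |x - z| := by
  rcases eq_or_ne (round x) z with h | h
  · rw [dist01, h]
  · have h1 : (1 : ℝ) ≤ |(round x : ℝ) - z| := by
      have : round x - z ≠ 0 := sub_ne_zero_of_ne h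
      have := Int.one_le_abs this
      exact_mod_cast this
    have h2 : |x - (round x : ℝ)| ≤ 1 / 2 := abs_sub_round x
    have h3 : |(round x : ℝ) - z| ≤ |(round x : ℝ) - x| + |x - z| := abs_sub_le _ _ _
    rw [abs_sub_comm (round x : ℝ) x] at h3
    rw [dist01]
    linarith

lemma simErr_nonneg (d : ℕ) (α : Fin d → ℝ) (m : ℕ) : 0 ≤ simErr d α m := by
  rcases isEmpty_or_nonempty (Fin d) with h | h
  · simp [simErr, Real.iSup_of_isEmpty]
  · exact le_ciSup_of_le (f := fun j : Fin d => dist01 ((m : ℝ) * α j))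
      (Set.finite_range _).bddAbove (Classical.arbitrary _) (dist01_nonneg _)

lemma dist01_le_simErr (d : ℕ) (α : Fin d → ℝ) (m : ℕ) (j : Fin d) :
    dist01 ((m : ℝ) * α j) ≤ simErr d α m :=
  le_ciSup (f := fun j : Fin d => dist01 ((m : ℝ) * α j)) (Set.finite_range _).bddAbove j

lemma simErr_le (d : ℕ) [Nonempty (Fin d)] (α : Fin d → ℝ) (m : ℕ) {b : ℝ}
    (h : ∀ j, dist01 ((m : ℝ) * α j) ≤ b) : simErr d α m ≤ b :=
  ciSup_le h

lemma simErr_le_half (d : ℕ) [Nonempty (Fin d)] (α : Fin d → ℝ) (m : ℕ) :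
    simErr d α m ≤ 1 / 2 :=
  simErr_le d α m fun _ => dist01_le_half _

/-- the key irrationality input: a nontrivial rational combination `n₀ + ∑ n_j α_j` is nonzero. -/
lemma L_ne_zero {d : ℕ} {α : Fin d → ℝ}
    (hli : LinearIndependent ℚ (Fin.cons 1 α : Fin (d + 1) → ℝ))
    (n : Fin (d + 1) → ℚ) (hn : n ≠ 0) :
    ((n 0 : ℝ) + ∑ j : Fin d, (n j.succ : ℝ) * α j) ≠ 0 := by
  intro hL
  apply hn
  have := Fintype.linearIndependent_iff.mp hli n ?_
  · funext k; exact this k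
  · rw [Fin.sum_univ_succ]
    simp only [Fin.cons_zero, Fin.cons_succ]
    have : ∀ (a : ℚ) (x : ℝ), a • x = (a : ℝ) * x := fun a x => by
      rw [Rat.smul_def]
    rw [this]
    simp only [this, mul_one]
    convert hL using 2

lemma simErr_pos {d : ℕ} {α : Fin d → ℝ} (hd : 0 < d)
    (hli : LinearIndependent ℚ (Fin.cons 1 α : Fin (d + 1) → ℝ))
    {m : ℕ} (hm : 0 < m) : 0 < simErr d α m := by
  haveI : Nonempty (Fin d) := ⟨⟨0, hd⟩⟩
  set j0 : Fin d := ⟨0, hd⟩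
  have h1 : 0 ≤ dist01 ((m : ℝ) * α j0) := dist01_nonneg _
  rcases h1.lt_or_eq with h | h
  · exact lt_of_lt_of_le h (dist01_le_simErr d α m j0)
  · exfalso
    set z : ℤ := round ((m : ℝ) * α j0) with hz
    have hrel : (m : ℝ) * α j0 = (z : ℝ) := by
      have := abs_eq_zero.mp h.symm
      linarith [sub_eq_zero.mp this]
    set n : Fin (d + 1) → ℚ := Fin.cons (-(z : ℚ)) (fun j => if j = j0 then (m : ℚ) else 0)
      with hn
    have hn0 : n ≠ 0 := by
      intro hcontra
      have : n j0.succ = 0 := by rw [hcontra]; rfl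
      rw [hn] at this
      simp only [Fin.cons_succ, if_pos rfl] at this
      exact_mod_cast hm.ne' (by exact_mod_cast this)
    apply L_ne_zero hli n hn0
    rw [hn]
    simp only [Fin.cons_zero, Fin.cons_succ]
    have heq : ∀ j : Fin d, (((if j = j0 then (m : ℚ) else 0) : ℚ) : ℝ) * α j
        = if j = j0 then (m : ℝ) * α j else 0 := by
      intro j; split <;> simp
    rw [Finset.sum_congr rfl (fun j _ => heq j),
      Fintype.sum_ite_eq' j0 (fun j => (m : ℝ) * α j), hrel]
    push_cast
    ring

section BestApprox

variable {d : ℕ} {α : Fin d → ℝ} {q : ℕ → ℕ}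

lemma q_zero (hsm : StrictMono q) (hpos : ∀ ν, 0 < q ν)
    (hrec : ∀ m : ℕ, 0 < m →
      (∀ m' : ℕ, 0 < m' → m' < m → simErr d α m < simErr d α m') → ∃ ν, q ν = m) :
    q 0 = 1 := by
  obtain ⟨ν, hν⟩ := hrec 1 one_pos (by intro m' h h'; omega)
  rcases Nat.eq_zero_or_pos ν with h | h
  · rw [← h]; exact hν
  · have := hsm h
    have := hpos 0
    omega

lemma xi_anti (hsm : StrictMono q) (hpos : ∀ ν, 0 < q ν)
    (hmin : ∀ ν, ∀ m : ℕ, 0 < m → m < q ν → simErr d α (q ν) < simErr d α m)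
    {μ ν : ℕ} (h : μ ≤ ν) : simErr d α (q ν) ≤ simErr d α (q μ) := by
  rcases h.lt_or_eq with h | h
  · exact (hmin ν (q μ) (hpos μ) (hsm h)).le
  · rw [h]

lemma le_simErr_of_lt_next (hsm : StrictMono q) (hpos : ∀ ν, 0 < q ν)
    (hmin : ∀ ν, ∀ m : ℕ, 0 < m → m < q ν → simErr d α (q ν) < simErr d α m)
    (hrec : ∀ m : ℕ, 0 < m →
      (∀ m' : ℕ, 0 < m' → m' < m → simErr d α m < simErr d α m') → ∃ ν, q ν = m)
    {ν m : ℕ} (hm : 0 < m) (hlt : m < q (ν + 1)) :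
    simErr d α (q ν) ≤ simErr d α m := by
  by_contra hcon
  push_neg at hcon
  have hex : ∃ k, 0 < k ∧ k < q (ν + 1) ∧ simErr d α k < simErr d α (q ν) :=
    ⟨m, hm, hlt, hcon⟩
  classical
  obtain ⟨h1, h2, h3⟩ := Nat.find_spec hex
  have hrecord : ∀ m' : ℕ, 0 < m' → m' < Nat.find hex →
      simErr d α (Nat.find hex) < simErr d α m' := by
    intro m' hm' hlt'
    have := Nat.find_min hex hlt'
    push_neg at this
    have h4 := this hm' (lt_trans hlt' h2)
    exact lt_of_lt_of_le h3 h4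
  obtain ⟨ρ, hρ⟩ := hrec (Nat.find hex) h1 hrecord
  rcases lt_trichotomy ρ ν with h | h | h
  · have := hmin ν (q ρ) (hpos ρ) (hsm h)
    rw [hρ] at this
    exact absurd (lt_trans h3 this) (lt_irrefl _)
  · rw [h] at hρ
    exact absurd (h3.trans_eq (congrArg (simErr d α) hρ)) (lt_irrefl _)
  · have : q (ν + 1) ≤ q ρ := hsm.monotone h
    omega

lemma exists_level (hsm : StrictMono q) (hpos : ∀ ν, 0 < q ν)
    (hrec : ∀ m : ℕ, 0 < m →
      (∀ m' : ℕ, 0 < m' → m' < m → simErr d α m < simErr d α m') → ∃ ν, q ν = m)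
    {m : ℕ} (hm : 0 < m) : ∃ ν, q ν ≤ m ∧ m < q (ν + 1) := by
  have h0 : q 0 ≤ m := by rw [q_zero hsm hpos hrec]; omega
  set s : Set ℕ := {i | q i ≤ m} with hs
  have hne : s.Nonempty := ⟨0, h0⟩
  have hbdd : BddAbove s := by
    refine ⟨m, fun i hi => ?_⟩
    exact le_trans hsm.le_apply hi
  refine ⟨sSup s, Nat.sSup_mem hne hbdd, ?_⟩
  by_contra hcon
  push_neg at hcon
  have : sSup s + 1 ∈ s := hcon
  have := le_csSup hbdd this
  omega

end BestApprox

lemma floor_close {a b : ℝ} (ha : 0 ≤ a) (hb : 0 ≤ b) (h : ⌊a⌋₊ = ⌊b⌋₊) :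
    |a - b| < 1 := by
  have h1 : (⌊a⌋₊ : ℝ) ≤ a := Nat.floor_le ha
  have h2 : a < ⌊a⌋₊ + 1 := Nat.lt_floor_add_one a
  have h3 : (⌊b⌋₊ : ℝ) ≤ b := Nat.floor_le hb
  have h4 : b < ⌊b⌋₊ + 1 := Nat.lt_floor_add_one b
  rw [h] at h1 h2
  rw [abs_sub_lt_iff]
  constructor <;> linarith

lemma dirichlet_pigeonhole (d : ℕ) (hd : 0 < d) (α : Fin d → ℝ) {ξ : ℝ}
    (hξ : 0 < ξ) (hξ2 : ξ ≤ 1 / 2) :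
    ∃ m : ℕ, 0 < m ∧ (m : ℝ) ≤ (2 / ξ) ^ d ∧ simErr d α m < ξ := by
  haveI : Nonempty (Fin d) := ⟨⟨0, hd⟩⟩
  classical
  set K : ℕ := ⌊1 / ξ⌋₊ + 1 with hK
  have hKpos : 0 < K := Nat.succ_pos _
  have hKR : (1 : ℝ) / ξ < K := by
    have := Nat.lt_floor_add_one (1 / ξ)
    rw [hK]; push_cast
    exact this
  have hKRpos : (0 : ℝ) < K := by positivity
  have hinvK : 1 / (K : ℝ) < ξ := by
    rw [div_lt_iff₀ hKRpos]
    rw [div_lt_iff₀ hξ] at hKR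
    linarith [mul_comm ξ (K : ℝ)]
  have hKle : (K : ℝ) ≤ 2 / ξ := by
    have h1 : (⌊1 / ξ⌋₊ : ℝ) ≤ 1 / ξ := Nat.floor_le (by positivity)
    have h2 : (1 : ℝ) ≤ 1 / ξ := by
      rw [le_div_iff₀ hξ]; linarith
    have : (K : ℝ) ≤ 1 / ξ + 1 := by rw [hK]; push_cast; linarith
    have : (K : ℝ) ≤ 2 * (1 / ξ) := by linarith
    calc (K : ℝ) ≤ 2 * (1 / ξ) := this
      _ = 2 / ξ := by ring
  -- pigeonhole map
  set f : Fin (K ^ d + 1) → (Fin d → Fin K) := fun k j =>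
    ⟨⌊Int.fract ((k : ℝ) * α j) * K⌋₊, by
      apply Nat.floor_lt (mul_nonneg (Int.fract_nonneg _) hKRpos.le) |>.mpr
      calc Int.fract ((k : ℝ) * α j) * K < 1 * K := by
            apply mul_lt_mul_of_pos_right (Int.fract_lt_one _) hKRpos
        _ = K := one_mul _⟩ with hf
  have hcard : Fintype.card (Fin d → Fin K) < Fintype.card (Fin (K ^ d + 1)) := by
    rw [Fintype.card_fun, Fintype.card_fin, Fintype.card_fin, Fintype.card_fin]
    omega
  obtain ⟨x, y, hxy, hfeq⟩ := Fintype.exists_ne_map_eq_of_card_lt f hcard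
  have main : ∀ x y : Fin (K ^ d + 1), (x : ℕ) < (y : ℕ) → f x = f y →
      ∃ m : ℕ, 0 < m ∧ (m : ℝ) ≤ (2 / ξ) ^ d ∧ simErr d α m < ξ := by
    intro x y hlt hfeq
    refine ⟨(y : ℕ) - (x : ℕ), by omega, ?_, ?_⟩
    · have h1 : ((y : ℕ) - (x : ℕ) : ℕ) ≤ K ^ d := by
        have := y.isLt; omega
      calc (((y : ℕ) - (x : ℕ) : ℕ) : ℝ) ≤ (K ^ d : ℕ) := by exact_mod_cast h1
        _ = (K : ℝ) ^ d := by push_cast; ring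
        _ ≤ (2 / ξ) ^ d := pow_le_pow_left₀ hKRpos.le hKle d
    · have hm : ∀ j : Fin d, dist01 ((((y : ℕ) - (x : ℕ) : ℕ) : ℝ) * α j) ≤ 1 / K := by
        intro j
        have hfj : ⌊Int.fract ((y : ℝ) * α j) * K⌋₊ = ⌊Int.fract ((x : ℝ) * α j) * K⌋₊ := by
          have := congrFun hfeq.symm j
          exact congrArg Fin.val this
        have hclose : |Int.fract ((y : ℝ) * α j) * K - Int.fract ((x : ℝ) * α j) * K| < 1 :=
          floor_close (mul_nonneg (Int.fract_nonneg _) hKRpos.le)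
            (mul_nonneg (Int.fract_nonneg _) hKRpos.le) hfj
        have hfract : |Int.fract ((y : ℝ) * α j) - Int.fract ((x : ℝ) * α j)| < 1 / K := by
          rw [lt_div_iff₀ hKRpos]
          calc |Int.fract ((y : ℝ) * α j) - Int.fract ((x : ℝ) * α j)| * K
              = |(Int.fract ((y : ℝ) * α j) - Int.fract ((x : ℝ) * α j)) * K| := by
                rw [abs_mul, abs_of_pos hKRpos]
            _ = |Int.fract ((y : ℝ) * α j) * K - Int.fract ((x : ℝ) * α j) * K| := by
                ring_nf
            _ < 1 := hclose
        set z : ℤ := ⌊(y : ℝ) * α j⌋ - ⌊(x : ℝ) * α j⌋ with hz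
        have hcast : (((y : ℕ) - (x : ℕ) : ℕ) : ℝ) = (y : ℝ) - (x : ℝ) := by
          push_cast [Nat.cast_sub hlt.le]; ring
        have hdiff : (((y : ℕ) - (x : ℕ) : ℕ) : ℝ) * α j - (z : ℝ)
            = Int.fract ((y : ℝ) * α j) - Int.fract ((x : ℝ) * α j) := by
          rw [hcast, hz, Int.fract, Int.fract]
          push_cast
          ring
        calc dist01 ((((y : ℕ) - (x : ℕ) : ℕ) : ℝ) * α j)
            ≤ |(((y : ℕ) - (x : ℕ) : ℕ) : ℝ) * α j - (z : ℝ)| := dist01_le_abs_sub_int _ z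
          _ = |Int.fract ((y : ℝ) * α j) - Int.fract ((x : ℝ) * α j)| := by rw [hdiff]
          _ ≤ 1 / K := hfract.le
      calc simErr d α ((y : ℕ) - (x : ℕ)) ≤ 1 / K := simErr_le d α _ hm
        _ < ξ := hinvK
  rcases lt_trichotomy (x : ℕ) (y : ℕ) with hlt | heq | hlt
  · exact main x y hlt hfeq
  · exact absurd (Fin.ext heq) hxy
  · exact main y x hlt hfeq.symm

/-! ### vectors attached to denominators -/

noncomputable def bav (d : ℕ) (α : Fin d → ℝ) (m : ℕ) : Fin (d + 1) → ℝ :=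
  Fin.cons (m : ℝ) (fun j => (m : ℝ) * α j - round ((m : ℝ) * α j))

noncomputable def baw (d : ℕ) (α : Fin d → ℝ) (m : ℕ) : Fin (d + 1) → ℤ :=
  Fin.cons (m : ℤ) (fun j => round ((m : ℝ) * α j))

lemma bav_zero (d : ℕ) (α : Fin d → ℝ) (m : ℕ) : bav d α m 0 = m := rfl

lemma bav_succ (d : ℕ) (α : Fin d → ℝ) (m : ℕ) (j : Fin d) :
    bav d α m j.succ = (m : ℝ) * α j - round ((m : ℝ) * α j) := by
  simp [bav]

lemma abs_bav_succ_le (d : ℕ) (α : Fin d → ℝ) (m : ℕ) (j : Fin d) :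
    |bav d α m j.succ| ≤ simErr d α m := by
  rw [bav_succ]
  exact dist01_le_simErr d α m j

/-- the linear map sending `(q, qα - p)` to `(q, p)`. -/
noncomputable def Tmap (d : ℕ) (α : Fin d → ℝ) : (Fin (d + 1) → ℝ) →ₗ[ℝ] (Fin (d + 1) → ℝ) where
  toFun x := Fin.cons (x 0) (fun j => x 0 * α j - x j.succ)
  map_add' x y := by
    funext k
    refine Fin.cases ?_ (fun j => ?_) k <;> simp <;> ring
  map_smul' c x := by
    funext k
    refine Fin.cases ?_ (fun j => ?_) k <;> simp <;> ring

lemma Tmap_bav (d : ℕ) (α : Fin d → ℝ) (m : ℕ) :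
    Tmap d α (bav d α m) = fun k => (baw d α m k : ℝ) := by
  funext k
  refine Fin.cases ?_ (fun j => ?_) k
  · simp [Tmap, bav, baw]
  · simp [Tmap, bav, baw]

/-- If some `bav` lies in the span of finitely many `bav`s, then the corresponding integer
vector lies in the span of the corresponding integer vectors. -/
lemma baw_mem_span {d : ℕ} {α : Fin d → ℝ} {r : ℕ} {g : Fin r → ℕ} {m : ℕ}
    (h : bav d α m ∈ Submodule.span ℝ (Set.range (fun t => bav d α (g t)))) :
    (fun k => (baw d α m k : ℝ)) ∈
      Submodule.span ℝ (Set.range (fun t => fun k => (baw d α (g t) k : ℝ))) := by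
  have h1 := Submodule.apply_mem_span_image_of_mem_span (Tmap d α) h
  rw [← Set.range_comp] at h1
  have h2 : (Tmap d α) ∘ (fun t => bav d α (g t))
      = fun t => fun k => (baw d α (g t) k : ℝ) := by
    funext t
    exact Tmap_bav d α (g t)
  rw [h2] at h1
  rw [← Tmap_bav d α m]
  exact h1

/-- The set of `μ` whose vector lies in the span of at most `d` chosen vectors is bounded. -/
lemma bdd_of_span {d : ℕ} {α : Fin d → ℝ} {q : ℕ → ℕ}
    (hli : LinearIndependent ℚ (Fin.cons 1 α : Fin (d + 1) → ℝ))
    (hsm : StrictMono q)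
    {r : ℕ} (hr : r ≤ d) (g : Fin r → ℕ) :
    BddAbove {μ : ℕ |
      bav d α (q μ) ∈ Submodule.span ℝ (Set.range (fun t => bav d α (q (g t))))} := by
  classical
  -- find a nonzero rational vector orthogonal to the integer vectors
  set M : Matrix (Fin r) (Fin (d + 1)) ℚ :=
    Matrix.of (fun t k => (baw d α (q (g t)) k : ℚ)) with hM
  have hker : ∃ n : Fin (d + 1) → ℚ, n ≠ 0 ∧ M.mulVecLin n = 0 := by
    by_contra hcon
    push_neg at hcon
    have hinj : Function.Injective M.mulVecLin := by
      rw [← LinearMap.ker_eq_bot]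
      rw [Submodule.eq_bot_iff]
      intro n hn
      by_contra hne
      exact (hcon n hne) hn
    have := LinearMap.finrank_le_finrank_of_injective hinj
    rw [Module.finrank_fintype_fun_eq_card, Module.finrank_fintype_fun_eq_card,
      Fintype.card_fin, Fintype.card_fin] at this
    omega
  obtain ⟨n, hn0, hnker⟩ := hker
  set L : ℝ := (n 0 : ℝ) + ∑ j : Fin d, (n j.succ : ℝ) * α j with hL
  have hLne : L ≠ 0 := L_ne_zero hli n hn0
  set B : ℝ := (∑ j : Fin d, |(n j.succ : ℝ)|) * (1 / 2) with hB
  have key : ∀ μ : ℕ,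
      bav d α (q μ) ∈ Submodule.span ℝ (Set.range (fun t => bav d α (q (g t)))) →
      (q μ : ℝ) * |L| ≤ B := by
    intro μ hμ
    have hw := baw_mem_span (g := fun t => q (g t)) hμ
    -- the functional given by `n` kills all the generators, hence the span
    set φ : (Fin (d + 1) → ℝ) →ₗ[ℝ] ℝ :=
      { toFun := fun x => ∑ k : Fin (d + 1), (n k : ℝ) * x k
        map_add' := by
          intro x y
          simp only [Pi.add_apply, mul_add]
          rw [Finset.sum_add_distrib]
        map_smul' := by
          intro c x
          simp only [Pi.smul_apply, smul_eq_mul, RingHom.id_apply]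
          rw [Finset.mul_sum]
          congr 1; funext k; ring } with hφ
    have hgen : ∀ t : Fin r, φ (fun k => (baw d α (q (g t)) k : ℝ)) = 0 := by
      intro t
      have := congrFun hnker t
      have h2 : ∑ k : Fin (d + 1), M t k * n k = 0 := this
      have h3 : ((∑ k : Fin (d + 1), M t k * n k : ℚ) : ℝ) = 0 := by exact_mod_cast h2
      push_cast at h3
      simp only [hφ, LinearMap.coe_mk, AddHom.coe_mk]
      rw [← h3]
      congr 1; funext k
      rw [hM]
      simp only [Matrix.of_apply]
      push_cast
      ring
    have hspan : Submodule.span ℝ (Set.range (fun t => fun k => (baw d α (q (g t)) k : ℝ)))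
        ≤ LinearMap.ker φ := by
      rw [Submodule.span_le]
      rintro x ⟨t, rfl⟩
      exact hgen t
    have hφμ : φ (fun k => (baw d α (q μ) k : ℝ)) = 0 := hspan hw
    -- expand: n 0 * qμ + ∑ n_j * p_j = 0
    have hexp' : (φ fun k => (baw d α (q μ) k : ℝ))
        = (n 0 : ℝ) * (q μ : ℝ)
          + ∑ j : Fin d, (n j.succ : ℝ) * (round ((q μ : ℝ) * α j) : ℝ) := by
      simp only [hφ, LinearMap.coe_mk, AddHom.coe_mk]
      rw [Fin.sum_univ_succ]
      simp [baw]
    have hexp : (n 0 : ℝ) * (q μ : ℝ)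
        + ∑ j : Fin d, (n j.succ : ℝ) * (round ((q μ : ℝ) * α j) : ℝ) = 0 := by
      rw [← hexp', hφμ]
    have hsum1 : ∑ j : Fin d, (n j.succ : ℝ) * ((q μ : ℝ) * α j - round ((q μ : ℝ) * α j))
        = ∑ j : Fin d, (n j.succ : ℝ) * ((q μ : ℝ) * α j)
          - ∑ j : Fin d, (n j.succ : ℝ) * (round ((q μ : ℝ) * α j) : ℝ) := by
      rw [← Finset.sum_sub_distrib]
      exact Finset.sum_congr rfl fun j _ => by ring
    have hsum2 : (q μ : ℝ) * ∑ j : Fin d, (n j.succ : ℝ) * α j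
        = ∑ j : Fin d, (n j.succ : ℝ) * ((q μ : ℝ) * α j) := by
      rw [Finset.mul_sum]
      exact Finset.sum_congr rfl fun j _ => by ring
    have hLexp : (q μ : ℝ) * L
        = (q μ : ℝ) * (n 0 : ℝ) + (q μ : ℝ) * ∑ j : Fin d, (n j.succ : ℝ) * α j := by
      rw [hL]; ring
    have hiden : (q μ : ℝ) * L
        = ∑ j : Fin d, (n j.succ : ℝ) * ((q μ : ℝ) * α j - round ((q μ : ℝ) * α j)) := by
      rw [hLexp, hsum2, hsum1]
      linarith [hexp]
    calc (q μ : ℝ) * |L| = |(q μ : ℝ) * L| := by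
          rw [abs_mul, abs_of_nonneg (by positivity : (0:ℝ) ≤ (q μ : ℝ))]
      _ = |∑ j : Fin d, (n j.succ : ℝ) * ((q μ : ℝ) * α j - round ((q μ : ℝ) * α j))| := by
          rw [hiden]
      _ ≤ ∑ j : Fin d, |(n j.succ : ℝ) * ((q μ : ℝ) * α j - round ((q μ : ℝ) * α j))| :=
          Finset.abs_sum_le_sum_abs _ _
      _ ≤ ∑ j : Fin d, |(n j.succ : ℝ)| * (1 / 2) := by
          apply Finset.sum_le_sum
          intro j _
          rw [abs_mul]
          exact mul_le_mul_of_nonneg_left (abs_sub_round _) (abs_nonneg _)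
      _ = B := by rw [hB, ← Finset.sum_mul]
  refine ⟨⌈B / |L|⌉₊, fun μ hμ => ?_⟩
  have h1 : (q μ : ℝ) * |L| ≤ B := key μ hμ
  have hLpos : 0 < |L| := abs_pos.mpr hLne
  have h2 : (q μ : ℝ) ≤ B / |L| := by
    rw [le_div_iff₀ hLpos]
    exact h1
  have h3 : (μ : ℝ) ≤ B / |L| := le_trans (by exact_mod_cast hsm.le_apply) h2
  calc μ ≤ ⌈(μ:ℝ)⌉₊ := by rw [Nat.ceil_natCast]
    _ ≤ ⌈B / |L|⌉₊ := Nat.ceil_le_ceil h3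

/-! ### the flag construction -/

noncomputable def nextIdx (d : ℕ) (α : Fin d → ℝ) (q : ℕ → ℕ) (ν : ℕ)
    {r : ℕ} (g : Fin r → ℕ) : ℕ :=
  sSup {μ : ℕ | ν ≤ μ ∧
    bav d α (q μ) ∈ Submodule.span ℝ (Set.range (fun t => bav d α (q (g t))))}

noncomputable def flag (d : ℕ) (α : Fin d → ℝ) (q : ℕ → ℕ) (ν : ℕ) :
    (i : ℕ) → Fin (i + 1) → ℕ
  | 0 => fun _ => ν
  | i + 1 => Fin.snoc (flag d α q ν i) (nextIdx d α q ν (flag d α q ν i) + 1)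

lemma flag_succ_def (d : ℕ) (α : Fin d → ℝ) (q : ℕ → ℕ) (ν : ℕ) (i : ℕ) :
    flag d α q ν (i + 1) = Fin.snoc (α := fun _ => ℕ) (flag d α q ν i)
      (nextIdx d α q ν (flag d α q ν i) + 1) := rfl

lemma flag_zero (d : ℕ) (α : Fin d → ℝ) (q : ℕ → ℕ) (ν : ℕ) :
    ∀ i, flag d α q ν i 0 = ν := by
  intro i
  induction i with
  | zero => rfl
  | succ i ih =>
    rw [flag_succ_def]
    have h0 : (0 : Fin (i + 2)) = Fin.castSucc (0 : Fin (i + 1)) := rfl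
    rw [h0, Fin.snoc_castSucc]
    exact ih

lemma flag_succ_apply (d : ℕ) (α : Fin d → ℝ) (q : ℕ → ℕ) (ν : ℕ) (i : ℕ) (t : Fin (i + 1)) :
    flag d α q ν (i + 1) (Fin.castSucc t) = flag d α q ν i t := by
  rw [flag_succ_def, Fin.snoc_castSucc]

lemma flag_prefix (d : ℕ) (α : Fin d → ℝ) (q : ℕ → ℕ) (ν : ℕ) :
    ∀ i j (_ : i ≤ j) (t : Fin (i + 1)),
      flag d α q ν j (Fin.castLE (by omega) t) = flag d α q ν i t := by
  intro i j
  induction j with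
  | zero =>
    intro h t
    have : i = 0 := by omega
    subst this
    rfl
  | succ j ih =>
    intro h t
    rcases Nat.lt_or_ge i (j + 1) with h' | h'
    · have h2 : i ≤ j := by omega
      have hcast : (Fin.castLE (by omega : i + 1 ≤ j + 2) t)
          = Fin.castSucc (Fin.castLE (by omega : i + 1 ≤ j + 1) t) := rfl
      rw [hcast, flag_succ_apply]
      exact ih h2 t
    · have h2 : i = j + 1 := by omega
      subst h2
      exact congrArg (flag d α q ν (j + 1)) (Fin.ext rfl)

lemma flag_succ_last (d : ℕ) (α : Fin d → ℝ) (q : ℕ → ℕ) (ν : ℕ) (i : ℕ) :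
    flag d α q ν (i + 1) (Fin.last (i + 1)) = nextIdx d α q ν (flag d α q ν i) + 1 := by
  rw [flag_succ_def, Fin.snoc_last]

/-- Specification of `nextIdx` for a family that is bounded and contains `bav (q ν)`. -/
lemma nextIdx_spec {d : ℕ} {α : Fin d → ℝ} {q : ℕ → ℕ}
    (hli : LinearIndependent ℚ (Fin.cons 1 α : Fin (d + 1) → ℝ))
    (hsm : StrictMono q) (ν : ℕ)
    {r : ℕ} (hr : r ≤ d) (g : Fin r → ℕ)
    (hne : bav d α (q ν) ∈ Submodule.span ℝ (Set.range (fun t => bav d α (q (g t))))) :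
    ν ≤ nextIdx d α q ν g ∧
    bav d α (q (nextIdx d α q ν g)) ∈
      Submodule.span ℝ (Set.range (fun t => bav d α (q (g t)))) ∧
    bav d α (q (nextIdx d α q ν g + 1)) ∉
      Submodule.span ℝ (Set.range (fun t => bav d α (q (g t)))) := by
  set S : Set ℕ := {μ : ℕ | ν ≤ μ ∧
    bav d α (q μ) ∈ Submodule.span ℝ (Set.range (fun t => bav d α (q (g t))))} with hS
  have hSne : S.Nonempty := ⟨ν, le_refl ν, hne⟩
  have hSbdd : BddAbove S := by
    apply BddAbove.mono _ (bdd_of_span hli hsm hr g)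
    intro μ hμ
    exact hμ.2
  have hmem : sSup S ∈ S := Nat.sSup_mem hSne hSbdd
  refine ⟨hmem.1, hmem.2, ?_⟩
  intro hcon
  have hmem2 : sSup S + 1 ∈ S := ⟨le_trans hmem.1 (Nat.le_succ _), hcon⟩
  have := le_csSup hSbdd hmem2
  omega

lemma flag_facts {d : ℕ} {α : Fin d → ℝ} {q : ℕ → ℕ}
    (hli : LinearIndependent ℚ (Fin.cons 1 α : Fin (d + 1) → ℝ))
    (hsm : StrictMono q) (hpos : ∀ μ, 0 < q μ) (ν : ℕ) :
    ∀ i, i ≤ d →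
      ((∀ t : Fin (i + 1), ν ≤ flag d α q ν i t) ∧
       LinearIndependent ℝ (fun t : Fin (i + 1) => bav d α (q (flag d α q ν i t)))) := by
  intro i
  induction i with
  | zero =>
    intro _
    constructor
    · intro t; exact le_refl ν
    · rw [Fintype.linearIndependent_iff]
      intro g hg t
      have h0 := congrFun hg 0
      rw [Fin.sum_univ_one] at h0
      have h1 : g 0 * (q (flag d α q ν 0 0) : ℝ) = 0 := by
        have := h0
        simpa [bav_zero] using this
      have h2 : (0:ℝ) < (q (flag d α q ν 0 0) : ℝ) := by
        exact_mod_cast hpos _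
      have h3 : g 0 = 0 := by
        rcases mul_eq_zero.mp h1 with h | h
        · exact h
        · exact absurd h (ne_of_gt h2)
      have : t = 0 := Fin.ext (by omega)
      rw [this]
      exact h3
  | succ i ih =>
    intro hle
    have hile : i ≤ d := by omega
    obtain ⟨hmono, hLI⟩ := ih hile
    have hne : bav d α (q ν)
        ∈ Submodule.span ℝ (Set.range (fun t => bav d α (q (flag d α q ν i t)))) := by
      apply Submodule.subset_span
      refine ⟨0, ?_⟩
      show bav d α (q (flag d α q ν i 0)) = bav d α (q ν)
      rw [flag_zero]
    obtain ⟨he1, _, he3⟩ := nextIdx_spec hli hsm ν (by omega : i + 1 ≤ d)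
      (flag d α q ν i) hne
    constructor
    · intro t
      refine Fin.lastCases ?_ (fun s => ?_) t
      · rw [flag_succ_last]
        omega
      · rw [flag_succ_apply]
        exact hmono s
    · have hfam : (fun t : Fin (i + 2) => bav d α (q (flag d α q ν (i + 1) t)))
          = Fin.snoc (fun t : Fin (i + 1) => bav d α (q (flag d α q ν i t)))
              (bav d α (q (nextIdx d α q ν (flag d α q ν i) + 1))) := by
        funext t
        refine Fin.lastCases ?_ (fun s => ?_) t
        · rw [flag_succ_last, Fin.snoc_last]
        · rw [flag_succ_apply, Fin.snoc_castSucc]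
      rw [hfam]
      rw [linearIndependent_fin_snoc]
      exact ⟨hLI, he3⟩

/-! ### determinant bounds -/

lemma det_bound {k : ℕ} (A : Matrix (Fin k) (Fin k) ℝ) {b : ℝ} (hb : 0 ≤ b)
    (h : ∀ i j, |A i j| ≤ b) : |A.det| ≤ (k.factorial : ℝ) * b ^ k := by
  rw [Matrix.det_apply]
  calc |∑ σ : Equiv.Perm (Fin k), Equiv.Perm.sign σ • ∏ i : Fin k, A (σ i) i|
      ≤ ∑ σ : Equiv.Perm (Fin k), |Equiv.Perm.sign σ • ∏ i : Fin k, A (σ i) i| :=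
        Finset.abs_sum_le_sum_abs _ _
    _ ≤ ∑ _σ : Equiv.Perm (Fin k), b ^ k := by
        apply Finset.sum_le_sum
        intro σ _
        have h1 : |Equiv.Perm.sign σ • ∏ i : Fin k, A (σ i) i|
            = |∏ i : Fin k, A (σ i) i| := by
          rcases Int.units_eq_one_or (Equiv.Perm.sign σ) with hs | hs <;>
            rw [hs] <;> simp
        rw [h1, Finset.abs_prod]
        calc ∏ i : Fin k, |A (σ i) i| ≤ ∏ _i : Fin k, b := by
              apply Finset.prod_le_prod
              · intro i _; exact abs_nonneg _
              · intro i _; exact h (σ i) i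
          _ = b ^ k := by rw [Finset.prod_const, Finset.card_univ, Fintype.card_fin]
    _ = (k.factorial : ℝ) * b ^ k := by
        rw [Finset.sum_const, Finset.card_univ, Fintype.card_perm, Fintype.card_fin,
          nsmul_eq_mul]

lemma sum_extend {n m : ℕ} (h : m ≤ n) (c : Fin m → ℝ) (f : Fin n → ℝ) :
    ∑ j : Fin n, (if hj : (j : ℕ) < m then c ⟨j, hj⟩ else 0) * f j
      = ∑ t : Fin m, c t * f (Fin.castLE h t) := by
  classical
  set F : ℕ → ℝ := fun x => if hx : x < m then c ⟨x, hx⟩ *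
    f (Fin.castLE h ⟨x, hx⟩) else 0 with hF
  have h1 : ∑ j : Fin n, (if hj : (j : ℕ) < m then c ⟨j, hj⟩ else 0) * f j
      = ∑ j : Fin n, F j := by
    apply Finset.sum_congr rfl
    intro j _
    show (if hj : (j : ℕ) < m then c ⟨j, hj⟩ else 0) * f j
      = if hx : (j : ℕ) < m then c ⟨(j : ℕ), hx⟩ * f (Fin.castLE h ⟨(j : ℕ), hx⟩) else 0
    by_cases hj : (j : ℕ) < m
    · rw [dif_pos hj, dif_pos hj]
      congr 1
    · rw [dif_neg hj, dif_neg hj, zero_mul]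
  have h2 : ∑ t : Fin m, c t * f (Fin.castLE h t) = ∑ t : Fin m, F t := by
    apply Finset.sum_congr rfl
    intro t _
    show c t * f (Fin.castLE h t)
      = if hx : (t : ℕ) < m then c ⟨(t : ℕ), hx⟩ * f (Fin.castLE h ⟨(t : ℕ), hx⟩) else 0
    rw [dif_pos t.isLt]
  rw [h1, h2, Fin.sum_univ_eq_sum_range, Fin.sum_univ_eq_sum_range]
  symm
  apply Finset.sum_subset
  · apply Finset.range_subset_range.mpr h
  · intro x _ hx
    rw [Finset.mem_range, not_lt] at hx
    show (if hx2 : x < m then c ⟨x, hx2⟩ * f (Fin.castLE h ⟨x, hx2⟩) else 0) = 0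
    rw [dif_neg (by omega)]

/-! ### the key lower bound -/

lemma key_lower {d : ℕ} {α : Fin d → ℝ} {q : ℕ → ℕ}
    (hli : LinearIndependent ℚ (Fin.cons 1 α : Fin (d + 1) → ℝ))
    (hsm : StrictMono q) (hpos : ∀ μ, 0 < q μ)
    (hmin : ∀ ν, ∀ m : ℕ, 0 < m → m < q ν → simErr d α (q ν) < simErr d α m)
    {C : ℝ} (hC1 : 1 ≤ C) (hC : ∀ μ, (q (μ + 1) : ℝ) ≤ C * q μ) (ν : ℕ) :
    1 ≤ (q ν : ℝ) * (d.factorial : ℝ) * ((C + 1) * simErr d α (q ν)) ^ d := by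
  classical
  set ξ : ℝ := simErr d α (q ν) with hξ
  have hξ0 : 0 ≤ ξ := simErr_nonneg d α _
  set G : Fin (d + 1) → ℕ := flag d α q ν d with hG
  set V : Matrix (Fin (d + 1)) (Fin (d + 1)) ℝ :=
    Matrix.of (fun i => bav d α (q (G i))) with hV
  obtain ⟨hmono, hLI⟩ := flag_facts hli hsm hpos ν d le_rfl
  -- data for each step
  set e : Fin d → ℕ := fun s => nextIdx d α q ν (flag d α q ν (s : ℕ)) with he
  have hspec : ∀ s : Fin d, ν ≤ e s ∧
      bav d α (q (e s)) ∈ Submodule.span ℝ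
        (Set.range (fun t : Fin ((s : ℕ) + 1) => bav d α (q (flag d α q ν (s : ℕ) t)))) := by
    intro s
    have hne : bav d α (q ν) ∈ Submodule.span ℝ
        (Set.range (fun t : Fin ((s : ℕ) + 1) => bav d α (q (flag d α q ν (s : ℕ) t)))) := by
      apply Submodule.subset_span
      refine ⟨0, ?_⟩
      show bav d α (q (flag d α q ν (s : ℕ) 0)) = bav d α (q ν)
      rw [flag_zero]
    obtain ⟨h1, h2, _⟩ := nextIdx_spec hli hsm ν (by omega : (s : ℕ) + 1 ≤ d)
      (flag d α q ν (s : ℕ)) hne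
    exact ⟨h1, h2⟩
  have hGsucc : ∀ s : Fin d, G s.succ = e s + 1 := by
    intro s
    have h1 : (s.succ : Fin (d + 1))
        = Fin.castLE (by omega : (s : ℕ) + 1 + 1 ≤ d + 1) (Fin.last ((s : ℕ) + 1)) := by
      apply Fin.ext; rfl
    rw [hG, h1, flag_prefix d α q ν ((s : ℕ) + 1) d (by omega),
      flag_succ_last]
  have hG0 : G 0 = ν := flag_zero d α q ν d
  -- coefficients
  have hcc : ∀ s : Fin d, ∃ cc : Fin ((s : ℕ) + 1) → ℝ,
      ∑ t, cc t • bav d α (q (flag d α q ν (s : ℕ) t)) = bav d α (q (e s)) := by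
    intro s
    exact (Submodule.mem_span_range_iff_exists_fun ℝ).mp (hspec s).2
  choose cc hccs using hcc
  set c : Fin d → ℝ := fun s => (q (e s + 1) : ℝ) / (q (e s) : ℝ) with hc
  have hc0 : ∀ s, 0 ≤ c s := by
    intro s; rw [hc]; positivity
  have hcC : ∀ s, c s ≤ C := by
    intro s
    rw [hc, div_le_iff₀ (by exact_mod_cast hpos (e s) : (0:ℝ) < (q (e s) : ℝ))]
    exact hC (e s)
  -- the reduction matrix
  set E : Matrix (Fin (d + 1)) (Fin (d + 1)) ℝ :=
    Matrix.of (fun i j => Fin.cases 0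
      (fun s => c s * (if hj : (j : ℕ) < (s : ℕ) + 1 then cc s ⟨j, hj⟩ else 0)) i) with hE
  have hE_zero_row : ∀ j, E 0 j = 0 := by
    intro j; rw [hE]; rfl
  have hE_succ : ∀ (s : Fin d) (j : Fin (d + 1)),
      E s.succ j = c s * (if hj : (j : ℕ) < (s : ℕ) + 1 then cc s ⟨j, hj⟩ else 0) := by
    intro s j
    rw [hE]
    simp only [Matrix.of_apply, Fin.cases_succ]
  set M : Matrix (Fin (d + 1)) (Fin (d + 1)) ℝ := 1 - E with hM
  have hEij0 : ∀ (i j : Fin (d + 1)), i < j → E i j = 0 := by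
    intro i j
    refine Fin.cases (fun _ => hE_zero_row j) (fun s hij => ?_) i
    · rw [hE_succ]
      rw [dif_neg (by
        have := hij
        have h1 : (s : ℕ) + 1 < (j : ℕ) := this
        omega)]
      ring
  have hMdet : M.det = 1 := by
    have htri : M.BlockTriangular OrderDual.toDual := by
      intro i j hij
      have hij' : i < j := hij
      rw [hM]
      simp only [Matrix.sub_apply]
      rw [Matrix.one_apply_ne (ne_of_lt hij'), hEij0 i j hij']
      ring
    rw [Matrix.det_of_lowerTriangular M htri]
    apply Finset.prod_eq_one
    intro i _
    have hEii : E i i = 0 := by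
      refine Fin.cases ?_ (fun s => ?_) i
      · exact hE_zero_row 0
      · rw [hE_succ]
        rw [dif_neg (by
          show ¬ ((s.succ : Fin (d+1)) : ℕ) < (s : ℕ) + 1
          simp)]
        ring
    rw [hM]
    simp only [Matrix.sub_apply]
    rw [Matrix.one_apply_eq, hEii]
    ring
  set V₂ : Matrix (Fin (d + 1)) (Fin (d + 1)) ℝ := M * V with hV₂
  have hVV : V₂ = V - E * V := by
    rw [hV₂, hM, Matrix.sub_mul, Matrix.one_mul]
  have hdet2 : V₂.det = V.det := by
    rw [hV₂, Matrix.det_mul, hMdet, one_mul]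
  -- rows of V₂
  have hEV : ∀ (s : Fin d) (k : Fin (d + 1)),
      (E * V) s.succ k = c s * bav d α (q (e s)) k := by
    intro s k
    rw [Matrix.mul_apply]
    have h1 : ∀ j : Fin (d + 1), E s.succ j * V j k
        = c s * ((if hj : (j : ℕ) < (s : ℕ) + 1 then cc s ⟨j, hj⟩ else 0) * V j k) := by
      intro j; rw [hE_succ]; ring
    rw [Finset.sum_congr rfl (fun j _ => h1 j), ← Finset.mul_sum]
    congr 1
    rw [sum_extend (by omega : (s : ℕ) + 1 ≤ d + 1) (cc s) (fun j => V j k)]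
    have h2 : ∀ t : Fin ((s : ℕ) + 1),
        V (Fin.castLE (by omega : (s : ℕ) + 1 ≤ d + 1) t) k
          = bav d α (q (flag d α q ν (s : ℕ) t)) k := by
      intro t
      rw [hV]
      simp only [Matrix.of_apply]
      congr 2
      rw [hG]
      exact flag_prefix d α q ν (s : ℕ) d (by omega) t
    calc ∑ t : Fin ((s : ℕ) + 1), cc s t
          * (fun j => V j k) (Fin.castLE (by omega : (s : ℕ) + 1 ≤ d + 1) t)
        = ∑ t : Fin ((s : ℕ) + 1), cc s t * bav d α (q (flag d α q ν (s : ℕ) t)) k := by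
          exact Finset.sum_congr rfl fun t _ => by rw [← h2 t]
      _ = (∑ t : Fin ((s : ℕ) + 1), cc s t • bav d α (q (flag d α q ν (s : ℕ) t))) k := by
          rw [Finset.sum_apply]
          exact Finset.sum_congr rfl fun t _ => rfl
      _ = bav d α (q (e s)) k := by rw [hccs s]
  have hrow0 : ∀ k, V₂ 0 k = bav d α (q ν) k := by
    intro k
    rw [hVV]
    simp only [Matrix.sub_apply]
    have hEV0 : (E * V) 0 k = 0 := by
      rw [Matrix.mul_apply]
      apply Finset.sum_eq_zero
      intro j _
      rw [hE_zero_row j]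
      ring
    rw [hEV0]
    have : V 0 k = bav d α (q (G 0)) k := rfl
    rw [this, hG0]
    ring
  have hrowsucc : ∀ (s : Fin d) (k : Fin (d + 1)),
      V₂ s.succ k = bav d α (q (e s + 1)) k - c s * bav d α (q (e s)) k := by
    intro s k
    rw [hVV]
    simp only [Matrix.sub_apply]
    rw [hEV s k]
    have : V s.succ k = bav d α (q (G s.succ)) k := rfl
    rw [this, hGsucc s]
  have hcol0 : ∀ s : Fin d, V₂ s.succ 0 = 0 := by
    intro s
    rw [hrowsucc s 0, bav_zero, bav_zero, hc]
    have hq0 : ((q (e s) : ℝ)) ≠ 0 := by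
      exact_mod_cast (hpos (e s)).ne'
    field_simp
    ring
  have hbound : ∀ (s : Fin d) (j : Fin d), |V₂ s.succ j.succ| ≤ (C + 1) * ξ := by
    intro s j
    rw [hrowsucc s j.succ]
    have hν1 : ν ≤ e s + 1 := by have := (hspec s).1; omega
    have hν2 : ν ≤ e s := (hspec s).1
    have hb1 : |bav d α (q (e s + 1)) j.succ| ≤ ξ :=
      le_trans (abs_bav_succ_le d α _ j) (xi_anti hsm hpos hmin hν1)
    have hb2 : |bav d α (q (e s)) j.succ| ≤ ξ :=
      le_trans (abs_bav_succ_le d α _ j) (xi_anti hsm hpos hmin hν2)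
    calc |bav d α (q (e s + 1)) j.succ - c s * bav d α (q (e s)) j.succ|
        ≤ |bav d α (q (e s + 1)) j.succ| + |c s * bav d α (q (e s)) j.succ| := abs_sub _ _
      _ = |bav d α (q (e s + 1)) j.succ| + c s * |bav d α (q (e s)) j.succ| := by
          rw [abs_mul, abs_of_nonneg (hc0 s)]
      _ ≤ ξ + C * ξ :=
          add_le_add hb1 (mul_le_mul (hcC s) hb2 (abs_nonneg _) (le_trans zero_le_one hC1))
      _ = (C + 1) * ξ := by ring
  -- expansion of the determinant along the first column
  have hexp : |V₂.det| ≤ (q ν : ℝ) * ((d.factorial : ℝ) * ((C + 1) * ξ) ^ d) := by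
    have hdexp := Matrix.det_succ_column_zero V₂
    have hcollapse : V₂.det = V₂ 0 0 * (V₂.submatrix (Fin.succAbove 0) Fin.succ).det := by
      have h0arg : ∀ b ∈ (Finset.univ : Finset (Fin (d + 1))), b ≠ 0 →
          (-1 : ℝ) ^ (b : ℕ) * V₂ b 0 * (V₂.submatrix b.succAbove Fin.succ).det = 0 := by
        intro i _ hi
        obtain ⟨s, rfl⟩ := Fin.eq_succ_of_ne_zero hi
        rw [hcol0 s]
        ring
      have h1arg : (0 : Fin (d + 1)) ∉ (Finset.univ : Finset (Fin (d + 1))) →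
          (-1 : ℝ) ^ ((0 : Fin (d + 1)) : ℕ) * V₂ 0 0
            * (V₂.submatrix (Fin.succAbove 0) Fin.succ).det = 0 :=
        fun h => absurd (Finset.mem_univ _) h
      rw [hdexp, Finset.sum_eq_single 0 h0arg h1arg]
      norm_num
    have h00 : V₂ 0 0 = (q ν : ℝ) := by rw [hrow0 0, bav_zero]
    have hqnn : (0 : ℝ) ≤ (q ν : ℝ) := by positivity
    rw [hcollapse, abs_mul, h00, abs_of_nonneg hqnn]
    apply mul_le_mul_of_nonneg_left _ hqnn
    have hb0 : (0 : ℝ) ≤ (C + 1) * ξ := by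
      apply mul_nonneg (by linarith) hξ0
    apply det_bound _ hb0
    intro t j
    have hsub : (V₂.submatrix (Fin.succAbove 0) Fin.succ) t j = V₂ t.succ j.succ := by
      rw [Matrix.submatrix_apply]
      congr 1
    rw [hsub]
    exact hbound t j
  -- integrality
  -- integrality of the determinant
  set W : Matrix (Fin (d + 1)) (Fin (d + 1)) ℤ :=
    Matrix.of (fun i => baw d α (q (G i))) with hW
  set A : Matrix (Fin (d + 1)) (Fin (d + 1)) ℝ :=
    Matrix.of (fun l k => Fin.cases (motive := fun _ => ℝ)
      (Fin.cases (motive := fun _ => ℝ) (1 : ℝ) (fun j => α j) k)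
      (fun l' => Fin.cases (motive := fun _ => ℝ) (0 : ℝ)
        (fun j => if l' = j then (-1 : ℝ) else 0) k) l) with hA
  have hA00 : A 0 0 = 1 := by
    rw [hA]; simp only [Matrix.of_apply, Fin.cases_zero]
  have hA0succ : ∀ j : Fin d, A 0 j.succ = α j := by
    intro j
    rw [hA]; simp only [Matrix.of_apply, Fin.cases_zero, Fin.cases_succ]
  have hAsucc0 : ∀ l : Fin d, A l.succ 0 = 0 := by
    intro l
    rw [hA]; simp only [Matrix.of_apply, Fin.cases_zero, Fin.cases_succ]
  have hAsuccsucc : ∀ l j : Fin d, A l.succ j.succ = if l = j then (-1 : ℝ) else 0 := by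
    intro l j
    rw [hA]; simp only [Matrix.of_apply, Fin.cases_succ]
  have hVWA : V = (W.map (Int.cast : ℤ → ℝ)) * A := by
    ext i k
    rw [Matrix.mul_apply, Fin.sum_univ_succ]
    refine Fin.cases ?_ (fun j => ?_) k
    · rw [hA00]
      have hz : ∀ l : Fin d, (W.map (Int.cast : ℤ → ℝ)) i l.succ * A l.succ 0 = 0 := by
        intro l; rw [hAsucc0 l]; ring
      rw [Finset.sum_congr rfl (fun l _ => hz l), Finset.sum_const, smul_zero]
      have hw0 : (W.map (Int.cast : ℤ → ℝ)) i 0 = (q (G i) : ℝ) := by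
        rw [Matrix.map_apply]
        have : W i 0 = (q (G i) : ℤ) := rfl
        rw [this]
        push_cast
        rfl
      rw [hw0]
      show V i 0 = (q (G i) : ℝ) * 1 + 0
      rw [hV]
      simp only [Matrix.of_apply, bav_zero]
      ring
    · rw [hA0succ j]
      have hsum : ∑ l : Fin d, (W.map (Int.cast : ℤ → ℝ)) i l.succ * A l.succ j.succ
          = - ((round ((q (G i) : ℝ) * α j) : ℤ) : ℝ) := by
        have hterm : ∀ l : Fin d, (W.map (Int.cast : ℤ → ℝ)) i l.succ * A l.succ j.succ
            = if l = j then - ((W i l.succ : ℤ) : ℝ) else 0 := by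
          intro l
          rw [hAsuccsucc l j]
          split <;> simp
        rw [Finset.sum_congr rfl (fun l _ => hterm l)]
        rw [Finset.sum_ite_eq' Finset.univ j (fun l => - ((W i l.succ : ℤ) : ℝ))]
        rw [if_pos (Finset.mem_univ j)]
        congr 2
      rw [hsum]
      have hw0 : (W.map (Int.cast : ℤ → ℝ)) i 0 = (q (G i) : ℝ) := by
        rw [Matrix.map_apply]
        have : W i 0 = (q (G i) : ℤ) := rfl
        rw [this]
        push_cast
        rfl
      rw [hw0]
      show V i j.succ = _
      rw [hV]
      simp only [Matrix.of_apply]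
      rw [bav_succ]
      push_cast
      ring
  have hAtri : A.BlockTriangular id := by
    intro i j hij
    have hij' : (j : ℕ) < (i : ℕ) := hij
    have hi0 : i ≠ 0 := by
      intro hc
      rw [hc] at hij'
      simp at hij'
    obtain ⟨l, rfl⟩ := Fin.eq_succ_of_ne_zero hi0
    rcases Fin.eq_zero_or_eq_succ j with hj0 | ⟨j', rfl⟩
    · rw [hj0]
      exact hAsucc0 l
    · rw [hAsuccsucc l j']
      rw [if_neg]
      intro hc
      subst hc
      have : (l.succ : ℕ) = (l : ℕ) + 1 := rfl
      omega
  have hAdet : |A.det| = 1 := by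
    rw [Matrix.det_of_upperTriangular hAtri]
    rw [Fin.prod_univ_succ, hA00]
    have : ∀ l : Fin d, A l.succ l.succ = -1 := by
      intro l; rw [hAsuccsucc l l, if_pos rfl]
    rw [Finset.prod_congr rfl (fun l _ => this l), Finset.prod_const]
    rw [abs_mul, abs_one, one_mul, abs_pow, abs_neg, abs_one, one_pow]
  have hVdet_ne : V.det ≠ 0 := by
    intro h0
    obtain ⟨g, hg0, hgV⟩ := Matrix.exists_vecMul_eq_zero_iff.mpr h0
    apply hg0
    have hli2 := Fintype.linearIndependent_iff.mp hLI g ?_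
    · funext t
      exact hli2 t
    · funext k
      have := congrFun hgV k
      rw [Matrix.vecMul, dotProduct] at this
      rw [Finset.sum_apply]
      calc ∑ i : Fin (d + 1), (g i • bav d α (q (flag d α q ν d i))) k
          = ∑ i : Fin (d + 1), g i * V i k := by
            apply Finset.sum_congr rfl
            intro i _
            rfl
        _ = 0 := this
  have hWVdet : |V.det| = |((W.det : ℤ) : ℝ)| := by
    rw [hVWA, Matrix.det_mul, abs_mul]
    have hmapdet : ((W.map (Int.cast : ℤ → ℝ))).det = ((W.det : ℤ) : ℝ) := by
      rw [show W.map (Int.cast : ℤ → ℝ) = (Int.castRingHom ℝ).mapMatrix W from rfl,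
        ← RingHom.map_det]
      rfl
    rw [hmapdet, hAdet, mul_one]
  have hWdet_ne : W.det ≠ 0 := by
    intro h0
    apply hVdet_ne
    rw [hVWA, Matrix.det_mul]
    have hmapdet : ((W.map (Int.cast : ℤ → ℝ))).det = ((W.det : ℤ) : ℝ) := by
      rw [show W.map (Int.cast : ℤ → ℝ) = (Int.castRingHom ℝ).mapMatrix W from rfl,
        ← RingHom.map_det]
      rfl
    rw [hmapdet, h0]
    push_cast
    ring
  have hint : (1 : ℝ) ≤ |V.det| := by
    rw [hWVdet]
    have h1 : (1 : ℤ) ≤ |W.det| := Int.one_le_abs hWdet_ne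
    calc (1 : ℝ) = ((1 : ℤ) : ℝ) := by norm_num
      _ ≤ ((|W.det| : ℤ) : ℝ) := by exact_mod_cast h1
      _ = |((W.det : ℤ) : ℝ)| := by push_cast; rfl
  calc (1 : ℝ) ≤ |V.det| := hint
    _ = |V₂.det| := by rw [hdet2]
    _ ≤ (q ν : ℝ) * ((d.factorial : ℝ) * ((C + 1) * ξ) ^ d) := hexp
    _ = (q ν : ℝ) * (d.factorial : ℝ) * ((C + 1) * ξ) ^ d := by ring

lemma rpow_one_div_pow {d : ℕ} (hd : 0 < d) {x : ℝ} (hx : 0 ≤ x) :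
    (x ^ ((1 : ℝ) / d)) ^ d = x := by
  rw [← Real.rpow_natCast (x ^ ((1 : ℝ) / d)) d, ← Real.rpow_mul hx]
  rw [one_div_mul_cancel (by exact_mod_cast hd.ne' : ((d : ℝ)) ≠ 0)]
  exact Real.rpow_one x

end BadApproxAux

open BadApproxAux in
theorem badly_approx_iff_sup_ratio_denoms_finite
    (d : ℕ) (α : Fin d → ℝ)
    (hli : LinearIndependent ℚ (Fin.cons 1 α : Fin (d + 1) → ℝ))
    (q : ℕ → ℕ) (hq : IsBestApproxDenoms d α q) :
    IsBadlyApprox d α ↔ ∃ C : ℝ, ∀ ν : ℕ, (q (ν + 1) : ℝ) / (q ν : ℝ) ≤ C := by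
  obtain ⟨hsm, hpos, hmin, hrec⟩ := hq
  rcases Nat.eq_zero_or_pos d with hd0 | hd
  · exfalso
    subst hd0
    have h2 : q 0 < q 1 := hsm (by omega)
    have h3 := hmin 1 1 one_pos (by have := hpos 0; omega)
    haveI : IsEmpty (Fin 0) := inferInstance
    have h4 : ∀ m : ℕ, simErr 0 α m = 0 := by
      intro m
      rw [simErr]
      exact Real.iSup_of_isEmpty _
    rw [h4, h4] at h3
    exact absurd h3 (lt_irrefl _)
  haveI : Nonempty (Fin d) := ⟨⟨0, hd⟩⟩
  constructor
  · rintro ⟨c, hc0, hc⟩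
    refine ⟨(2 / c) ^ d, fun ν => ?_⟩
    set ξ : ℝ := simErr d α (q ν) with hξdef
    have hqpos : (0 : ℝ) < (q ν : ℝ) := by exact_mod_cast hpos ν
    have hX : (0 : ℝ) < (q ν : ℝ) ^ ((1 : ℝ) / d) := Real.rpow_pos_of_pos hqpos _
    have hcν := hc (q ν) (hpos ν)
    have hξpos : 0 < ξ := by
      by_contra hcon
      push_neg at hcon
      have : (q ν : ℝ) ^ ((1 : ℝ) / d) * ξ ≤ 0 := mul_nonpos_of_nonneg_of_nonpos hX.le hcon
      linarith
    have hξhalf : ξ ≤ 1 / 2 := simErr_le_half d α (q ν)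
    obtain ⟨m, hm0, hmle, hmlt⟩ := dirichlet_pigeonhole d hd α hξpos hξhalf
    have hqm : q (ν + 1) ≤ m := by
      by_contra hcon
      push_neg at hcon
      have := le_simErr_of_lt_next hsm hpos hmin hrec hm0 hcon
      rw [← hξdef] at this
      linarith
    have h1 : (q (ν + 1) : ℝ) ≤ (2 / ξ) ^ d := le_trans (by exact_mod_cast hqm) hmle
    have h2 : 2 / ξ ≤ 2 * ((q ν : ℝ) ^ ((1 : ℝ) / d)) / c := by
      rw [div_le_div_iff₀ hξpos hc0]
      calc 2 * c ≤ 2 * ((q ν : ℝ) ^ ((1 : ℝ) / d) * ξ) := by linarith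
        _ = 2 * (q ν : ℝ) ^ ((1 : ℝ) / d) * ξ := by ring
    have h3 : (2 / ξ) ^ d ≤ (2 * ((q ν : ℝ) ^ ((1 : ℝ) / d)) / c) ^ d := by
      apply pow_le_pow_left₀ (by positivity) h2
    have h4 : (2 * ((q ν : ℝ) ^ ((1 : ℝ) / d)) / c) ^ d = (2 / c) ^ d * (q ν : ℝ) := by
      rw [show 2 * ((q ν : ℝ) ^ ((1 : ℝ) / d)) / c = (2 / c) * ((q ν : ℝ) ^ ((1 : ℝ) / d)) by
        ring]
      rw [mul_pow, rpow_one_div_pow hd hqpos.le]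
    rw [div_le_iff₀ hqpos]
    calc (q (ν + 1) : ℝ) ≤ (2 / ξ) ^ d := h1
      _ ≤ (2 * ((q ν : ℝ) ^ ((1 : ℝ) / d)) / c) ^ d := h3
      _ = (2 / c) ^ d * (q ν : ℝ) := h4
  · rintro ⟨C0, hC0⟩
    set C : ℝ := max C0 1 with hCdef
    have hC1 : 1 ≤ C := le_max_right _ _
    have hC : ∀ μ, (q (μ + 1) : ℝ) ≤ C * q μ := by
      intro μ
      have hqpos : (0 : ℝ) < (q μ : ℝ) := by exact_mod_cast hpos μ
      have := hC0 μ
      rw [div_le_iff₀ hqpos] at this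
      calc (q (μ + 1) : ℝ) ≤ C0 * q μ := this
        _ ≤ C * q μ := by
          apply mul_le_mul_of_nonneg_right (le_max_left _ _) hqpos.le
    set c₁ : ℝ := 1 / ((d.factorial : ℝ) * (C + 1) ^ d) with hc₁def
    have hc₁pos : 0 < c₁ := by
      rw [hc₁def]
      have h1 : (0 : ℝ) < (d.factorial : ℝ) := by exact_mod_cast d.factorial_pos
      have h2 : (0 : ℝ) < (C + 1) ^ d := by positivity
      positivity
    have hkey : ∀ ν, c₁ ≤ (q ν : ℝ) * simErr d α (q ν) ^ d := by
      intro ν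
      have h1 := key_lower hli hsm hpos hmin hC1 hC ν
      rw [hc₁def]
      rw [div_le_iff₀ (by positivity)]
      calc (1 : ℝ) ≤ (q ν : ℝ) * (d.factorial : ℝ) * ((C + 1) * simErr d α (q ν)) ^ d := h1
        _ = (q ν : ℝ) * simErr d α (q ν) ^ d * ((d.factorial : ℝ) * (C + 1) ^ d) := by
            rw [mul_pow]; ring
    refine ⟨c₁ ^ ((1 : ℝ) / d), Real.rpow_pos_of_pos hc₁pos _, fun m hm => ?_⟩
    obtain ⟨ν, hν1, hν2⟩ := exists_level hsm hpos hrec hm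
    have hsimnn : 0 ≤ simErr d α (q ν) := simErr_nonneg d α _
    have hsim : simErr d α (q ν) ≤ simErr d α m :=
      le_simErr_of_lt_next hsm hpos hmin hrec hm hν2
    have hq0 : (0 : ℝ) ≤ (q ν : ℝ) := by positivity
    have hY : (0 : ℝ) ≤ (q ν : ℝ) ^ ((1 : ℝ) / d) := Real.rpow_nonneg hq0 _
    have hXY : (q ν : ℝ) ^ ((1 : ℝ) / d) ≤ (m : ℝ) ^ ((1 : ℝ) / d) := by
      apply Real.rpow_le_rpow hq0 (by exact_mod_cast hν1) (by positivity)
    have hstep : c₁ ^ ((1 : ℝ) / d) ≤ (q ν : ℝ) ^ ((1 : ℝ) / d) * simErr d α (q ν) := by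
      apply le_of_pow_le_pow_left₀ hd.ne' (by positivity)
      rw [mul_pow, rpow_one_div_pow hd hc₁pos.le, rpow_one_div_pow hd hq0]
      exact hkey ν
    calc c₁ ^ ((1 : ℝ) / d) ≤ (q ν : ℝ) ^ ((1 : ℝ) / d) * simErr d α (q ν) := hstep
      _ ≤ (m : ℝ) ^ ((1 : ℝ) / d) * simErr d α m := by
          apply mul_le_mul hXY hsim hsimnn (by positivity)
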